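/- In the ring MW_* := ℤ[ρ₁, ρ₃, ρ₄, ρ₅, …] with the additive map d¹ defined by d¹(ρ₁) = 2, d¹(ρ_{2n}) = ρ_{2n−1} for n ≥ 2, d¹(ρ_{2n+1}) = 0, extended by the twisted Leibniz rule d¹(xy) = d¹(x)y + x d¹(y) − ρ₁ d¹(x)d¹(y), the composite d¹ ∘ d¹ = 0. -/
import Mathlib


open MvPolynomial

/-- Truncation `ℤ[ρ₁, ρ₃, ρ₄]` of `MW₋ = ℤ[ρ₁, ρ₃, ρ₄, ρ₅, …]`:
`ρ₁ = X 0`, `ρ₃ = X 1`, `ρ₄ = X 2`. -/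
noncomputable abbrev MW : Type := MvPolynomial (Fin 3) ℤ

noncomputable def ρ1 : MW := X 0
noncomputable def ρ3 : MW := X 1
noncomputable def ρ4 : MW := X 2

/-- The first Bockstein differential `d¹` on `MW₋`, an additive map with `d¹(ρ₁) = 2`,
`d¹(ρ₃) = 0`, `d¹(ρ₄) = ρ₃`, satisfying the twisted Leibniz rule
`d¹(xy) = d¹(x)y + x d¹(y) − ρ₁ d¹(x) d¹(y)`, squares to zero: `d¹ ∘ d¹ = 0`. -/
theorem stmt16 (d : MW →+ MW)
    (hρ1 : d ρ1 = 2) (hρ3 : d ρ3 = 0) (hρ4 : d ρ4 = ρ3)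
    (hLeib : ∀ x y : MW, d (x * y) = d x * y + x * d y - ρ1 * d x * d y) :
    ∀ x : MW, d (d x) = 0 := by
  -- First: d 1 = 0
  have h1 : d (1 : MW) = 0 := by
    have h := hLeib 1 1
    rw [one_mul, one_mul, mul_one] at h
    have hfac : d (1 : MW) * (1 - ρ1 * d 1) = 0 := by linear_combination -h
    rcases mul_eq_zero.mp hfac with h0 | h0
    · exact h0
    · exfalso
      have h1' : ρ1 * d (1 : MW) = 1 := by linear_combination -h0
      have := congrArg (MvPolynomial.constantCoeff) h1'
      simp [ρ1] at this
  -- d kills constants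
  have hC : ∀ a : ℤ, d (C a : MW) = 0 := by
    intro a
    have : (C a : MW) = a • (1 : MW) := by
      rw [zsmul_eq_mul, mul_one]
      simp [Int.cast, IntCast.intCast]
    rw [this, map_zsmul, h1, smul_zero]
  -- product lemma
  have hmul : ∀ x y : MW, d (d x) = 0 → d (d y) = 0 → d (d (x * y)) = 0 := by
    intro x y hx hy
    have hstep : d (ρ1 * d x) = 2 * d x := by
      rw [hLeib, hρ1, hx]; ring
    have hassoc : ρ1 * d x * d y = (ρ1 * d x) * d y := by ring
    rw [hLeib x y, map_sub, map_add, hLeib (d x) y, hLeib x (d y), hassoc,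
      hLeib (ρ1 * d x) (d y), hstep, hx, hy]
    ring
  -- dd vanishes on generators
  have hXi : ∀ i : Fin 3, d (d (X i : MvPolynomial (Fin 3) ℤ)) = 0 := by
    intro i
    fin_cases i
    · show d (d ρ1) = 0
      rw [hρ1]
      have : (2 : MW) = 1 + 1 := by ring
      rw [this, map_add, h1, add_zero]
    · show d (d ρ3) = 0
      rw [hρ3, map_zero]
    · show d (d ρ4) = 0
      rw [hρ4, hρ3]
  intro x
  induction x using MvPolynomial.induction_on with
  | C a => rw [hC a, map_zero]
  | add p q hp hq => rw [map_add, map_add, hp, hq, add_zero]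
  | mul_X p i hp => exact hmul p (X i) hp (hXi i)
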